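/- Let G be a finite group, p a prime, X a strongly p-embedded subgroup of G, and S a Sylow p-subgroup of G with S ≤ X. Then every Sylow p-subgroup Q of G that is joined to S by a path in Γ_p(G) satisfies Q ≤ X; consequently X contains the setwise stabilizer H = {g ∈ G : gSg⁻¹ is joined to S by a path in Γ_p(G)} of the connected component of Γ_p(G) containing the vertex S. -/

import Mathlib

open Pointwise

/-- The graph `Γ_p(G)` whose vertices are the Sylow `p`-subgroups of `G`, two distinct
Sylow `p`-subgroups being adjacent exactly when their intersection is nontrivial. -/
def sylowGraph (p : ℕ) (G : Type*) [Group G] : SimpleGraph (Sylow p G) where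
  Adj P Q := P ≠ Q ∧ (P : Subgroup G) ⊓ (Q : Subgroup G) ≠ ⊥
  symm := ⟨fun P Q h => ⟨h.1.symm, by rw [inf_comm]; exact h.2⟩⟩
  loopless := ⟨fun P h => h.1 rfl⟩

/-- If `X` is strongly `p`-embedded and a Sylow `p`-subgroup `Q` meets `X` nontrivially,
then `Q ≤ X`. -/
lemma sylow_le_of_inf_ne_bot {p : ℕ} (hp : p.Prime) {G : Type*} [Group G] [Finite G]
    (X : Subgroup G)
    (hXemb : ∀ g : G, p ∣ Nat.card ↥(X ⊓ Subgroup.map (MulAut.conj g).toMonoidHom X) → g ∈ X)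
    (Q : Sylow p G) (hQ : (Q : Subgroup G) ⊓ X ≠ ⊥) : (Q : Subgroup G) ≤ X := by
  haveI : Fact p.Prime := ⟨hp⟩
  set R' : Subgroup ↥(Q : Subgroup G) := X.comap (Q : Subgroup G).subtype with hR'def
  have hmap : R'.map (Q : Subgroup G).subtype = (Q : Subgroup G) ⊓ X := by
    rw [hR'def, Subgroup.map_comap_eq, Subgroup.range_subtype]
  suffices h : R' = ⊤ by
    intro x hx
    have : (⟨x, hx⟩ : ↥(Q : Subgroup G)) ∈ R' := h ▸ Subgroup.mem_top _
    exact this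
  by_contra hR'
  -- normalizer growth in the finite p-group Q
  have hnil : Group.IsNilpotent ↥(Q : Subgroup G) := Q.isPGroup'.isNilpotent
  have hNC : NormalizerCondition ↥(Q : Subgroup G) := normalizerCondition_of_isNilpotent
  have hlt : R' < Subgroup.normalizer (R' : Set ↥(Q : Subgroup G)) := hNC R' (lt_top_iff_ne_top.mpr hR')
  obtain ⟨g, hgN, hgR'⟩ := SetLike.exists_of_lt hlt
  -- the subgroup R = Q ⊓ X is contained in X ⊓ gXg⁻¹
  have hRle : (Q : Subgroup G) ⊓ X ≤ X ⊓ Subgroup.map (MulAut.conj (g : G)).toMonoidHom X := by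
    refine le_inf inf_le_right ?_
    intro y hy
    rw [← hmap] at hy
    obtain ⟨z, hz, rfl⟩ := hy
    refine ⟨(g⁻¹ * z * g : ↥(Q : Subgroup G)) , ?_, ?_⟩
    · have : g⁻¹ * z * g ∈ R' := by
        have := (Subgroup.mem_normalizer_iff.mp (inv_mem hgN) z).mp hz
        simpa [mul_assoc] using this
      exact this
    · simp [MulAut.conj_apply, mul_assoc]
  -- p divides |Q ⊓ X|
  have hpg : IsPGroup p ↥((Q : Subgroup G) ⊓ X) := Q.isPGroup'.to_le inf_le_left
  have hpdvd : p ∣ Nat.card ↥((Q : Subgroup G) ⊓ X) := by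
    obtain ⟨n, hn⟩ := IsPGroup.iff_card.mp hpg
    have h1 : 1 < Nat.card ↥((Q : Subgroup G) ⊓ X) :=
      (Subgroup.one_lt_card_iff_ne_bot _).mpr hQ
    rcases n with _ | n
    · rw [hn, pow_zero] at h1; exact absurd h1 (by norm_num)
    · exact hn ▸ dvd_pow_self p (Nat.succ_ne_zero n)
  have hgX : (g : G) ∈ X :=
    hXemb g (hpdvd.trans (Subgroup.card_dvd_of_le hRle))
  exact hgR' (by simpa [hR'def, Subgroup.mem_subgroupOf] using hgX)

/-- Let `X` be a strongly `p`-embedded subgroup of a finite group `G` and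
`S` a Sylow `p`-subgroup of `G` with `S ≤ X`.  Then every Sylow `p`-subgroup of `G` joined
to `S` by a path in `Γ_p(G)` is contained in `X`; consequently `X` contains the setwise
stabilizer `H = {g ∈ G | g • S is joined to S in Γ_p(G)}` of the connected component of
`Γ_p(G)` containing `S`. -/
theorem stmt_8 {p : ℕ} (hp : p.Prime) (G : Type*) [Group G] [Finite G]
    (X : Subgroup G) (hXne : X ≠ ⊤) (hXp : p ∣ Nat.card X)
    (hXemb : ∀ g : G, p ∣ Nat.card ↥(X ⊓ Subgroup.map (MulAut.conj g).toMonoidHom X) → g ∈ X)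
    (S : Sylow p G) (hSX : (S : Subgroup G) ≤ X) :
    (∀ Q : Sylow p G, (sylowGraph p G).Reachable Q S → (Q : Subgroup G) ≤ X) ∧
      ∀ g : G, (sylowGraph p G).Reachable (g • S) S → g ∈ X := by
  haveI : Fact p.Prime := ⟨hp⟩
  have key : ∀ (Q R : Sylow p G), (sylowGraph p G).Walk Q R → (R : Subgroup G) ≤ X →
      (Q : Subgroup G) ≤ X := by
    intro Q R w
    induction w with
    | nil => exact id
    | cons h w ih =>
      rename_i u v _
      intro hR
      have hvX : (v : Subgroup G) ≤ X := ih hR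
      have hne : (u : Subgroup G) ⊓ X ≠ ⊥ := by
        intro hbot
        exact (h : u ≠ v ∧ (u : Subgroup G) ⊓ (v : Subgroup G) ≠ ⊥).2 (le_bot_iff.mp (hbot ▸ inf_le_inf_left _ hvX))
      exact sylow_le_of_inf_ne_bot hp X hXemb u hne
  have main : ∀ Q : Sylow p G, (sylowGraph p G).Reachable Q S → (Q : Subgroup G) ≤ X := by
    intro Q hQ
    obtain ⟨w⟩ := hQ
    exact key Q S w hSX
  refine ⟨main, fun g hg => ?_⟩
  have hgS : ((g • S : Sylow p G) : Subgroup G) ≤ X := main _ hg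
  -- p divides |S|
  have hpG : p ∣ Nat.card G := hXp.trans (Subgroup.card_subgroup_dvd_card X)
  have hpS : p ∣ Nat.card ↥(S : Subgroup G) := by
    rw [S.card_eq_multiplicity]
    refine dvd_pow_self p ?_
    have := Nat.Prime.factorization_pos_of_dvd hp Nat.card_pos.ne' hpG
    omega
  -- gSg⁻¹ ≤ X ⊓ gXg⁻¹
  have hle : ((g • S : Sylow p G) : Subgroup G) ≤
      X ⊓ Subgroup.map (MulAut.conj g).toMonoidHom X := by
    refine le_inf hgS ?_
    rw [Sylow.coe_subgroup_smul, Subgroup.pointwise_smul_def]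
    exact Subgroup.map_mono hSX
  have hcard : Nat.card ↥((g • S : Sylow p G) : Subgroup G) = Nat.card ↥(S : Subgroup G) :=
    Nat.card_congr (S.equivSMul g).toEquiv.symm
  exact hXemb g ((hcard ▸ hpS).trans (Subgroup.card_dvd_of_le hle))
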